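/- Let (X,d) be a totally bounded pseudometric space with d bounded by 1, and let A be a set of 1-Lipschitz (nonexpansive) functions X → [0,1] such that: A contains the constant function 0; A is closed under pointwise maximum and pointwise minimum; for every u ∈ [0,1], A is closed under f ↦ (x ↦ min(f x + u, 1)) and under f ↦ (x ↦ |f x − u|); and A is initial, i.e. d x y = ⨆_{f∈A} |f x − f y| for all x,y ∈ X. Then A is uniformly dense in the 1-Lipschitz functions: for every 1-Lipschitz g : X → [0,1] and every ε > 0 there exists f ∈ A with |f x − g x| ≤ ε for all x ∈ X. -/

import Mathlib

private lemma sw_inf'_mem {X : Type*} {A : Set (X → ℝ)}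
    (hA_min : ∀ f ∈ A, ∀ g ∈ A, (fun x => min (f x) (g x)) ∈ A)
    {ι : Type*} (S : Finset ι) (hS : S.Nonempty) (F : ι → X → ℝ)
    (hF : ∀ i ∈ S, F i ∈ A) :
    (fun x => S.inf' hS (fun i => F i x)) ∈ A := by
  induction hS using Finset.Nonempty.cons_induction with
  | singleton a => simp only [Finset.inf'_singleton]; exact hF a (Finset.mem_singleton_self a)
  | cons a s ha hs ih =>
      simp only [Finset.inf'_cons hs]
      exact hA_min _ (hF a (Finset.mem_cons_self a s)) _
        (ih fun i hi => hF i (Finset.mem_cons_of_mem hi))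

private lemma sw_sup'_mem {X : Type*} {A : Set (X → ℝ)}
    (hA_max : ∀ f ∈ A, ∀ g ∈ A, (fun x => max (f x) (g x)) ∈ A)
    {ι : Type*} (S : Finset ι) (hS : S.Nonempty) (F : ι → X → ℝ)
    (hF : ∀ i ∈ S, F i ∈ A) :
    (fun x => S.sup' hS (fun i => F i x)) ∈ A := by
  induction hS using Finset.Nonempty.cons_induction with
  | singleton a => simp only [Finset.sup'_singleton]; exact hF a (Finset.mem_singleton_self a)
  | cons a s ha hs ih =>
      simp only [Finset.sup'_cons hs]
      exact hA_max _ (hF a (Finset.mem_cons_self a s)) _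
        (ih fun i hi => hF i (Finset.mem_cons_of_mem hi))


/-- Stone-Weierstrass for totally bounded pseudometric spaces: an
initial propositional algebra A of nonexpansive [0,1]-valued functions (containing
the constant 0, closed under pointwise max, pointwise min, truncated addition of
constants, and distance to constants) is uniformly dense in the 1-Lipschitz
functions. -/
theorem sw_totally_bounded
    {X : Type*} (d : X → X → ℝ)
    (hd_nonneg : ∀ x y, 0 ≤ d x y)
    (hd_refl : ∀ x, d x x = 0)
    (hd_symm : ∀ x y, d x y = d y x)
    (hd_tri : ∀ x y z, d x z ≤ d x y + d y z)
    (hd_bound : ∀ x y, d x y ≤ 1)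
    (htb : ∀ ε : ℝ, 0 < ε → ∃ S : Finset X, ∀ x : X, ∃ y ∈ S, d x y < ε)
    (A : Set (X → ℝ))
    (hA : ∀ f ∈ A, (∀ x, f x ∈ Set.Icc (0 : ℝ) 1) ∧ ∀ x y, |f x - f y| ≤ d x y)
    (hA_zero : (fun _ : X => (0 : ℝ)) ∈ A)
    (hA_max : ∀ f ∈ A, ∀ g ∈ A, (fun x => max (f x) (g x)) ∈ A)
    (hA_min : ∀ f ∈ A, ∀ g ∈ A, (fun x => min (f x) (g x)) ∈ A)
    (hA_add : ∀ u ∈ Set.Icc (0 : ℝ) 1, ∀ f ∈ A, (fun x => min (f x + u) 1) ∈ A)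
    (hA_dist : ∀ u ∈ Set.Icc (0 : ℝ) 1, ∀ f ∈ A, (fun x => |f x - u|) ∈ A)
    (hA_init : ∀ x y, d x y = ⨆ f : A, |f.1 x - f.1 y|) :
    ∀ g : X → ℝ, (∀ x, g x ∈ Set.Icc (0 : ℝ) 1) →
      (∀ x y, |g x - g y| ≤ d x y) →
      ∀ ε : ℝ, 0 < ε → ∃ f ∈ A, ∀ x : X, |f x - g x| ≤ ε := by
  intro g hg hgLip ε hε
  by_cases hX : Nonempty X
  · -- constants are in A
    have hconst : ∀ c ∈ Set.Icc (0 : ℝ) 1, (fun _ : X => c) ∈ A := by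
      intro c hc
      have h := hA_add c hc _ hA_zero
      simpa [min_eq_left hc.2] using h
    -- two-point interpolation, one-sided
    have key : ∀ x y : X, ∀ δ : ℝ, 0 < δ → g y ≤ g x →
        ∃ h ∈ A, |h x - g x| ≤ δ ∧ h y = g y := by
      intro x y δ hδ hab
      have hax := hg x; have hay := hg y
      have hab1 : g x - g y ∈ Set.Icc (0 : ℝ) 1 :=
        ⟨by linarith [hay.1, hax.1], by linarith [hax.2, hay.1]⟩
      have hlt : d x y - δ < ⨆ f : A, |f.1 x - f.1 y| := by
        rw [← hA_init]; linarith
      haveI : Nonempty A := ⟨⟨_, hA_zero⟩⟩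
      obtain ⟨⟨f, hfA⟩, hf⟩ := exists_lt_of_lt_ciSup hlt
      simp only at hf
      have hfy : f y ∈ Set.Icc (0 : ℝ) 1 := (hA f hfA).1 y
      have hf1 : (fun z => |f z - f y|) ∈ A := hA_dist (f y) hfy _ hfA
      have hf2 : (fun z => min (|f z - f y|) (g x - g y)) ∈ A := by
        have := hA_min _ hf1 _ (hconst (g x - g y) hab1)
        simpa using this
      have hf3 : (fun z => min (min (|f z - f y|) (g x - g y) + g y) 1) ∈ A :=
        hA_add (g y) hay _ hf2
      refine ⟨_, hf3, ?_, ?_⟩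
      · have hdxy : g x - g y ≤ d x y := by
          have := hgLip x y
          calc g x - g y ≤ |g x - g y| := le_abs_self _
          _ ≤ d x y := this
        have h1 : min (|f x - f y|) (g x - g y) ≥ g x - g y - δ := by
          have : d x y - δ < |f x - f y| := hf
          refine le_min (by linarith) (by linarith)
        have h2 : min (|f x - f y|) (g x - g y) ≤ g x - g y := min_le_right _ _
        have h3 : min (min (|f x - f y|) (g x - g y) + g y) 1
            = min (|f x - f y|) (g x - g y) + g y := by
          apply min_eq_left; linarith [hax.2]
        rw [h3, abs_le]; constructor <;> linarith
      · have : min (|f y - f y|) (g x - g y) = 0 := by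
          simp [min_eq_left hab1.1, abs_nonpos_iff]
        simp only [this, zero_add]
        exact min_eq_left hay.2
    -- symmetric two-point lemma
    have key2 : ∀ x y : X, ∀ δ : ℝ, 0 < δ →
        ∃ h ∈ A, |h x - g x| ≤ δ ∧ |h y - g y| ≤ δ := by
      intro x y δ hδ
      rcases le_total (g y) (g x) with h | h
      · obtain ⟨h', hA', h1, h2⟩ := key x y δ hδ h
        exact ⟨h', hA', h1, by simp [h2, le_of_lt hδ]⟩
      · obtain ⟨h', hA', h1, h2⟩ := key y x δ hδ h
        exact ⟨h', hA', by simp [h2, le_of_lt hδ], h1⟩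
    -- main construction
    set δ : ℝ := ε / 3 with hδdef
    have hδ : 0 < δ := by positivity
    obtain ⟨S, hS⟩ := htb δ hδ
    obtain ⟨x0⟩ := hX
    obtain ⟨y0, hy0, -⟩ := hS x0
    have hSne : S.Nonempty := ⟨y0, hy0⟩
    choose F hFA hF1 hF2 using fun p q : X => key2 p q δ hδ
    set f : X → ℝ := fun x => S.sup' hSne (fun p => S.inf' hSne (fun q => F p q x))
      with hfdef
    have hfA : f ∈ A := by
      apply sw_sup'_mem hA_max S hSne
      intro p hp
      exact sw_inf'_mem hA_min S hSne _ (fun q hq => hFA p q)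
    have hnet : ∀ q ∈ S, |f q - g q| ≤ δ := by
      intro q hq
      rw [abs_le]
      constructor
      · have h1 : S.inf' hSne (fun r => F q r q) ≥ g q - δ := by
          apply Finset.le_inf'
          intro r hr
          have := hF1 q r
          rw [abs_le] at this; linarith [this.1]
        have h2 : f q ≥ S.inf' hSne (fun r => F q r q) :=
          Finset.le_sup' (fun p => S.inf' hSne (fun r => F p r q)) hq
        linarith
      · have : f q ≤ g q + δ := by
          apply Finset.sup'_le
          intro p hp
          have h3 : S.inf' hSne (fun r => F p r q) ≤ F p q q :=
            Finset.inf'_le _ hq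
          have := hF2 p q
          rw [abs_le] at this; linarith [this.1, this.2]
        linarith
    refine ⟨f, hfA, ?_⟩
    intro x
    obtain ⟨y, hyS, hxy⟩ := hS x
    have hfLip := (hA f hfA).2 x y
    have hgL := hgLip y x
    have hny := hnet y hyS
    have tri : |f x - g x| ≤ |f x - f y| + |f y - g y| + |g y - g x| := by
      have := abs_sub_le (f x) (f y) (g x)
      have := abs_sub_le (f y) (g y) (g x)
      calc |f x - g x| ≤ |f x - f y| + |f y - g x| := abs_sub_le _ _ _
      _ ≤ |f x - f y| + (|f y - g y| + |g y - g x|) := by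
          linarith [abs_sub_le (f y) (g y) (g x)]
      _ = _ := by ring
    have hd1 : d y x < δ := by rw [hd_symm]; exact hxy
    have : |f x - g x| < 3 * δ := by
      have h1 : |f x - f y| ≤ d x y := hfLip
      have h2 : |g y - g x| ≤ d y x := hgL
      linarith
    linarith [this, (by linarith : 3 * δ = ε)]
  · exact ⟨_, hA_zero, fun x => absurd ⟨x⟩ hX⟩
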